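/- arXiv:1307.4274 — 6 statements merged into one kernel-verified Lean document; each statement's English description precedes it below -/
import Mathlib

section
/- For every real number x with 0 ≤ x < 1 it holds that e^{−x} / (1 − x) ≤ e^{x²/(2−2x)}. -/
lemma log_lower_aux (t : ℝ) (ht : 0 < t) (ht1 : t ≤ 1) :
    t / 2 - 1 / (2 * t) ≤ Real.log t := by
  set f : ℝ → ℝ := fun s => Real.log s - s / 2 + (1 / 2) * s⁻¹ with hf
  have hsub : Set.Icc t 1 ⊆ {(0:ℝ)}ᶜ := by
    intro s hs
    simp only [Set.mem_compl_iff, Set.mem_singleton_iff]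
    exact (lt_of_lt_of_le ht hs.1).ne'
  have hderiv : ∀ s : ℝ, 0 < s →
      HasDerivAt f (s⁻¹ - 1 / 2 + (1 / 2) * (-(s ^ 2)⁻¹)) s := fun s hs0 =>
    ((Real.hasDerivAt_log hs0.ne').sub
      ((hasDerivAt_id s).div_const 2)).add ((hasDerivAt_inv hs0.ne').const_mul (1/2))
  have hanti : AntitoneOn f (Set.Icc t 1) := by
    apply antitoneOn_of_deriv_nonpos (convex_Icc t 1)
    · apply ContinuousOn.add
      · exact (Real.continuousOn_log.mono hsub).sub (continuous_id.div_const 2).continuousOn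
      · exact continuousOn_const.mul (continuousOn_inv₀.mono hsub)
    · intro s hs
      rw [interior_Icc] at hs
      exact ((hderiv s (lt_trans ht hs.1)).differentiableAt).differentiableWithinAt
    · intro s hs
      rw [interior_Icc] at hs
      have hs0 : 0 < s := lt_trans ht hs.1
      rw [(hderiv s hs0).deriv]
      have heq : s⁻¹ - 1 / 2 + (1 / 2) * (-(s ^ 2)⁻¹) = -((s - 1) ^ 2) / (2 * s ^ 2) := by
        field_simp
        ring
      rw [heq]
      apply div_nonpos_of_nonpos_of_nonneg
      · nlinarith [sq_nonneg (s - 1)]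
      · positivity
  have h1 : f 1 ≤ f t := hanti (Set.mem_Icc.mpr ⟨le_refl t, ht1⟩)
    (Set.mem_Icc.mpr ⟨ht1, le_refl 1⟩) ht1
  have hf1 : f 1 = 0 := by simp [hf]
  have hft : f t = Real.log t - t / 2 + (1 / 2) * t⁻¹ := rfl
  rw [hf1, hft] at h1
  have : (1 / 2) * t⁻¹ = 1 / (2 * t) := by field_simp
  linarith [this ▸ h1]

theorem exp_neg_div_one_sub_le (x : ℝ) (hx0 : 0 ≤ x) (hx1 : x < 1) :
    Real.exp (-x) / (1 - x) ≤ Real.exp (x ^ 2 / (2 - 2 * x)) := by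
  have ht : (0:ℝ) < 1 - x := by linarith
  have key := log_lower_aux (1 - x) ht (by linarith)
  rw [div_le_iff₀ ht, ← Real.exp_log ht, ← Real.exp_add, Real.exp_le_exp]
  have heq : x ^ 2 / (2 - 2 * x) + ((1 - x) / 2 - 1 / (2 * (1 - x))) = -x := by
    rw [show (2 - 2 * x) = 2 * (1 - x) by ring]
    field_simp
    ring
  linarith
end

section
/- For every real number x with 0 ≤ x < 1 it holds that 1 + ∑_{i=1}^∞ x^{2i} / ((1 − x) · (2i)!) ≤ e^{x²/(2−2x)}. -/
lemma two_pow_mul_factorial_le (n : ℕ) : 2 ^ n * n.factorial ≤ (2 * n).factorial := by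
  induction n with
  | zero => simp
  | succ n ih =>
    have h : 2 * (n + 1) = (2 * n + 1) + 1 := by ring
    rw [h, Nat.factorial_succ, Nat.factorial_succ, Nat.factorial_succ, pow_succ]
    calc 2 ^ n * 2 * ((n + 1) * n.factorial)
        = (n + 1) * 2 * (2 ^ n * n.factorial) := by ring
      _ ≤ (n + 1) * 2 * (2 * n).factorial := by
          exact Nat.mul_le_mul_left _ ih
      _ = (2 * n + 1 + 1) * (1 * (2 * n).factorial) := by ring
      _ ≤ (2 * n + 1 + 1) * ((2 * n + 1) * (2 * n).factorial) :=
          Nat.mul_le_mul_left _ (Nat.mul_le_mul_right _ (by omega))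

theorem one_add_tsum_le_exp (x : ℝ) (hx0 : 0 ≤ x) (hx1 : x < 1) :
    1 + ∑' i : ℕ, x ^ (2 * (i + 1)) / ((1 - x) * Nat.factorial (2 * (i + 1)))
      ≤ Real.exp (x ^ 2 / (2 - 2 * x)) := by
  set y : ℝ := x ^ 2 / (2 - 2 * x) with hy
  have ht : (0:ℝ) < 1 - x := by linarith
  have ht1 : (1:ℝ) - x ≤ 1 := by linarith
  -- key termwise bound
  have key : ∀ i : ℕ, x ^ (2 * (i + 1)) / ((1 - x) * Nat.factorial (2 * (i + 1)))
      ≤ y ^ (i + 1) / Nat.factorial (i + 1) := by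
    intro i
    have hyi : y ^ (i + 1) = x ^ (2 * (i + 1)) / ((2 - 2 * x) ^ (i + 1)) := by
      rw [hy, div_pow, ← pow_mul]
    rw [hyi, div_div]
    apply div_le_div_of_nonneg_left (by positivity)
      (mul_pos (pow_pos (by linarith) _) (by positivity))
    -- show (2-2x)^(i+1) * (i+1)! ≤ (1-x) * (2(i+1))!
    have h1 : ((2:ℝ) - 2 * x) ^ (i + 1) = 2 ^ (i + 1) * (1 - x) ^ (i + 1) := by
      rw [← mul_pow]; ring_nf
    have h2 : ((1:ℝ) - x) ^ (i + 1) ≤ (1 - x) := by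
      calc ((1:ℝ) - x) ^ (i + 1) ≤ (1 - x) ^ 1 :=
        pow_le_pow_of_le_one ht.le ht1 (by omega)
      _ = 1 - x := pow_one _
    have h3 : (2:ℝ) ^ (i + 1) * Nat.factorial (i + 1) ≤ Nat.factorial (2 * (i + 1)) := by
      exact_mod_cast two_pow_mul_factorial_le (i + 1)
    calc ((2:ℝ) - 2 * x) ^ (i + 1) * Nat.factorial (i + 1)
        = (1 - x) ^ (i + 1) * (2 ^ (i + 1) * Nat.factorial (i + 1)) := by rw [h1]; ring
      _ ≤ (1 - x) * Nat.factorial (2 * (i + 1)) := by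
          apply mul_le_mul h2 h3 ?_ ht.le
          positivity
  have hy0 : 0 ≤ y := div_nonneg (by positivity) (by linarith)
  have hsumb : Summable (fun i : ℕ => y ^ (i + 1) / Nat.factorial (i + 1)) :=
    (Real.summable_pow_div_factorial y).comp_injective (add_left_injective 1)
  have hsuma : Summable (fun i : ℕ =>
      x ^ (2 * (i + 1)) / ((1 - x) * Nat.factorial (2 * (i + 1)))) := by
    apply Summable.of_nonneg_of_le (fun i => by positivity) key hsumb
  have hle : (∑' i : ℕ, x ^ (2 * (i + 1)) / ((1 - x) * Nat.factorial (2 * (i + 1))))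
      ≤ ∑' i : ℕ, y ^ (i + 1) / Nat.factorial (i + 1) :=
    Summable.tsum_le_tsum key hsuma hsumb
  have hexp : Real.exp y = 1 + ∑' i : ℕ, y ^ (i + 1) / Nat.factorial (i + 1) := by
    have h : Real.exp y = ∑' n : ℕ, y ^ n / n.factorial := by
      rw [Real.exp_eq_exp_ℝ, NormedSpace.exp_eq_tsum_div]
    rw [h, Summable.tsum_eq_zero_add (Real.summable_pow_div_factorial y)]
    simp
  rw [hexp]
  linarith
end

section
/- Let Y be geometrically distributed on {1, 2, 3, …} with success probability p ∈ (0, 1]. For every real number t ≥ 0 it holds that E[e^{−tY}] ≤ 1 / (1 + t/p) ≤ e^{t²/(2p²)} · e^{−t/p}. -/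
open MeasureTheory ProbabilityTheory
open scoped ENNReal

private lemma geom_aux_second (s : ℝ) (hs : 0 ≤ s) :
    1 / (1 + s) ≤ Real.exp (s ^ 2 / 2 - s) := by
  have h1s : (0:ℝ) < 1 + s := by linarith
  rw [div_le_iff₀ h1s]
  rcases le_or_gt 1 s with h | h
  · have h2 : Real.exp (s ^ 2 / 2 - s) ≥ 1/2 := by
      have := Real.add_one_le_exp (-(1/2) : ℝ)
      have hmono : Real.exp (-(1/2):ℝ) ≤ Real.exp (s ^ 2 / 2 - s) := by
        apply Real.exp_le_exp.mpr; nlinarith [sq_nonneg (s-1)]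
      linarith
    nlinarith
  · have hb : Real.exp s ≤ 1 + s + s^2/2 + s^3 * (2/9) := by
      have := Real.exp_bound' hs h.le (n := 3) (by norm_num)
      simp [Finset.sum_range_succ] at this
      norm_num [Nat.factorial] at this
      nlinarith [this]
    have hq : 1 + s^2/2 ≤ Real.exp (s^2/2) := by
      have := Real.add_one_le_exp (s^2/2); linarith
    have key : Real.exp s ≤ Real.exp (s^2/2) * (1 + s) := by
      nlinarith [Real.exp_pos (s^2/2), sq_nonneg s, pow_nonneg hs 3]
    have hrw : Real.exp (s ^ 2 / 2 - s) * (1 + s)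
        = Real.exp (s^2/2) * (1+s) / Real.exp s := by
      rw [Real.exp_sub]; ring
    rw [hrw, le_div_iff₀ (Real.exp_pos s)]
    linarith

private lemma geom_aux_first (p t : ℝ) (hp0 : 0 < p) (hp1 : p ≤ 1) (ht : 0 ≤ t) :
    p * Real.exp (-t) * (1 - (1 - p) * Real.exp (-t))⁻¹ ≤ 1 / (1 + t / p) := by
  have he : Real.exp (-t) * (1 + t) ≤ 1 := by
    have h1 := Real.add_one_le_exp t
    have h2 : Real.exp (-t) = (Real.exp t)⁻¹ := by rw [Real.exp_neg]
    rw [h2, inv_mul_le_iff₀ (Real.exp_pos t)]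
    nlinarith [Real.exp_pos t]
  have hq : (1 - p) * Real.exp (-t) ≤ 1 - p := by
    nlinarith [Real.exp_le_one_iff.mpr (neg_nonpos.mpr ht), Real.exp_pos (-t)]
  have hden : 0 < 1 - (1 - p) * Real.exp (-t) := by linarith
  have h1 : 1 + t / p = (p + t) / p := by field_simp
  rw [h1, one_div_div, ← div_eq_mul_inv, div_le_div_iff₀ hden (by linarith)]
  nlinarith [Real.exp_pos (-t)]

private lemma geom_aux_integral
    {Ω : Type*} [MeasurableSpace Ω] (μ : Measure Ω) [IsProbabilityMeasure μ]
    (Y : Ω → ℕ) (p : ℝ) (hp0 : 0 < p) (hp1 : p ≤ 1)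
    (hmeas : Measurable Y)
    (hgeom : ∀ j : ℕ, 1 ≤ j →
      μ {ω | Y ω = j} = ENNReal.ofReal ((1 - p) ^ (j - 1) * p))
    (t : ℝ) (ht : 0 ≤ t) :
    (∫ ω, Real.exp (-t * (Y ω : ℝ)) ∂μ)
      = p * Real.exp (-t) * (1 - (1 - p) * Real.exp (-t))⁻¹ := by
  have h1p : 0 ≤ 1 - p := by linarith
  set ν : Measure ℕ := μ.map Y with hν
  haveI : IsProbabilityMeasure ν := Measure.isProbabilityMeasure_map hmeas.aemeasurable
  have hνn : ∀ n : ℕ, ν {n} = μ {ω | Y ω = n} := by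
    intro n
    rw [hν, Measure.map_apply hmeas (measurableSet_singleton n)]
    congr 1
  have hmap0 : ∀ h : ℕ → ℝ, Measurable h → (∫ ω, h (Y ω) ∂μ) = ∫ n, h n ∂ν := by
    intro h hh
    rw [hν, integral_map hmeas.aemeasurable hh.aestronglyMeasurable]
  clear_value ν
  clear hν
  have hsummand : Summable (fun j : ℕ => (1 - p) ^ j * p) :=
    ((summable_geometric_of_lt_one h1p (by linarith)).mul_right p)
  have hsum1 : ∑' j : ℕ, (1 - p) ^ j * p = 1 := by
    rw [tsum_mul_right, tsum_geometric_of_lt_one h1p (by linarith)]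
    field_simp
    rw [sub_sub_cancel, div_self hp0.ne']
  have hsumE : ∑' j : ℕ, ENNReal.ofReal ((1 - p) ^ j * p) = 1 := by
    rw [← ENNReal.ofReal_tsum_of_nonneg (fun j => by positivity) hsummand, hsum1,
      ENNReal.ofReal_one]
  have hνsucc : ∀ j : ℕ, ν {j + 1} = ENNReal.ofReal ((1 - p) ^ j * p) := by
    intro j
    rw [hνn, hgeom (j + 1) (by omega)]
    norm_num
  have hν0 : ν {0} = 0 := by
    have hcompl : ν ({0}ᶜ) = 1 := by
      have : ({0}ᶜ : Set ℕ) = ⋃ j : ℕ, {j + 1} := by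
        ext n; simp [Set.mem_iUnion]
      rw [this, measure_iUnion (fun i j hij => by
          simpa [Set.disjoint_singleton] using fun h => hij (by omega))
        (fun i => measurableSet_singleton _)]
      simpa [hνsucc] using hsumE
    have h := measure_add_measure_compl (μ := ν) (measurableSet_singleton 0)
    rw [hcompl, measure_univ] at h
    exact (ENNReal.add_left_inj ENNReal.one_ne_top).mp (by rw [h, zero_add])
  set g : ℕ → ℝ := fun n => Real.exp (-t * n) with hg
  have hgpos : ∀ n, 0 < g n := fun n => Real.exp_pos _
  have hgle : ∀ n, g n ≤ 1 := fun n => Real.exp_le_one_iff.mpr (by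
    have : (0:ℝ) ≤ (n:ℝ) := Nat.cast_nonneg n
    nlinarith)
  have hgmeas : Measurable g := measurable_of_countable g
  have hgint : Integrable g ν := by
    refine Integrable.mono' (integrable_const 1) hgmeas.aestronglyMeasurable ?_
    filter_upwards with n
    rw [Real.norm_of_nonneg (hgpos n).le]
    exact hgle n
  have hmap : (∫ ω, Real.exp (-t * (Y ω : ℝ)) ∂μ) = ∫ n, g n ∂ν := hmap0 g hgmeas
  rw [hmap, integral_countable' hgint]
  simp only [measureReal_def]
  have huniv : ∑' n : ℕ, ν {n} = 1 := by
    rw [tsum_eq_zero_add' ENNReal.summable, hν0, zero_add]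
    simpa [hνsucc] using hsumE
  have hto : Summable (fun n : ℕ => (ν {n}).toReal) :=
    ENNReal.summable_toReal (by rw [huniv]; exact ENNReal.one_ne_top)
  have hf : Summable (fun n : ℕ => (ν {n}).toReal • g n) := by
    refine Summable.of_nonneg_of_le (fun n => by positivity) (fun n => ?_) hto
    have := (ν {n}).toReal_nonneg
    calc (ν {n}).toReal • g n = (ν {n}).toReal * g n := rfl
      _ ≤ (ν {n}).toReal * 1 := by nlinarith [hgle n, hgpos n]
      _ = (ν {n}).toReal := mul_one _
  rw [Summable.tsum_eq_zero_add hf, hν0]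
  simp only [ENNReal.toReal_zero, zero_smul, zero_add]
  have hterm : ∀ j : ℕ, (ν {j + 1}).toReal • g (j + 1)
      = (p * Real.exp (-t)) * ((1 - p) * Real.exp (-t)) ^ j := by
    intro j
    rw [hνsucc j, ENNReal.toReal_ofReal (by positivity)]
    have hgj : g (j + 1) = Real.exp (-t) ^ (j + 1) := by
      rw [hg]
      simp only []
      rw [show (-t * ((j:ℕ) + 1 : ℕ) : ℝ) = ((j + 1 : ℕ) : ℝ) * (-t) by push_cast; ring,
        ← Real.exp_nat_mul]
    rw [smul_eq_mul, hgj, pow_succ, mul_pow]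
    ring
  rw [tsum_congr hterm, tsum_mul_left,
    tsum_geometric_of_lt_one (by positivity)
      (by nlinarith [Real.exp_le_one_iff.mpr (neg_nonpos.mpr ht), Real.exp_pos (-t)])]

theorem geometric_mgf_neg_bound
    {Ω : Type*} [MeasurableSpace Ω] (μ : Measure Ω) [IsProbabilityMeasure μ]
    (Y : Ω → ℕ) (p : ℝ) (hp0 : 0 < p) (hp1 : p ≤ 1)
    (hmeas : Measurable Y)
    (hgeom : ∀ j : ℕ, 1 ≤ j →
      μ {ω | Y ω = j} = ENNReal.ofReal ((1 - p) ^ (j - 1) * p))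
    (t : ℝ) (ht : 0 ≤ t) :
    (∫ ω, Real.exp (-t * (Y ω : ℝ)) ∂μ) ≤ 1 / (1 + t / p) ∧
    1 / (1 + t / p) ≤ Real.exp (t ^ 2 / (2 * p ^ 2)) * Real.exp (-t / p) := by
  constructor
  · rw [geom_aux_integral μ Y p hp0 hp1 hmeas hgeom t ht]
    exact geom_aux_first p t hp0 hp1 ht
  · have hs : 0 ≤ t / p := div_nonneg ht hp0.le
    have h1 : t ^ 2 / (2 * p ^ 2) = (t / p) ^ 2 / 2 := by
      rw [div_pow]; rw [div_div]; ring_nf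
    have h2 : -t / p = -(t / p) := by ring
    rw [h1, h2, ← Real.exp_add]
    have := geom_aux_second (t / p) hs
    convert this using 2
    ring
end

section
/- Let Y be geometrically distributed on {1, 2, 3, …} with success probability p ∈ (0, 1]. For every real number t with 0 ≤ t ≤ p/2 it holds that E[e^{tY}] ≤ e^{t/p} · e^{t²/p²}. -/
open MeasureTheory ProbabilityTheory

lemma aux_exp_mul_one_sub_le {t : ℝ} : Real.exp t * (1 - t) ≤ 1 := by
  have h := Real.add_one_le_exp (-t)
  calc Real.exp t * (1 - t) ≤ Real.exp t * Real.exp (-t) := by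
        apply mul_le_mul_of_nonneg_left (by linarith) (Real.exp_pos t).le
    _ = 1 := by rw [← Real.exp_add]; simp

lemma aux_inv_le_exp {u : ℝ} (h0 : 0 ≤ u) (h1 : u ≤ 1/2) :
    1 ≤ (1 - u) * Real.exp (u + u ^ 2) := by
  have hx : (0:ℝ) ≤ u + u ^ 2 := by positivity
  have h := Real.quadratic_le_exp_of_nonneg hx
  have h2 : 1 ≤ (1 - u) * (1 + (u + u ^ 2) + (u + u ^ 2) ^ 2 / 2) := by
    nlinarith [sq_nonneg u, pow_le_pow_left₀ h0 h1 3]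
  calc (1:ℝ) ≤ (1 - u) * (1 + (u + u ^ 2) + (u + u ^ 2) ^ 2 / 2) := h2
    _ ≤ (1 - u) * Real.exp (u + u ^ 2) := by
        apply mul_le_mul_of_nonneg_left h (by linarith)

theorem geometric_mgf_pos_bound
    {Ω : Type*} [MeasurableSpace Ω] (μ : Measure Ω) [IsProbabilityMeasure μ]
    (Y : Ω → ℕ) (p : ℝ) (hp0 : 0 < p) (hp1 : p ≤ 1)
    (hmeas : Measurable Y)
    (hgeom : ∀ j : ℕ, 1 ≤ j →
      μ {ω | Y ω = j} = ENNReal.ofReal ((1 - p) ^ (j - 1) * p))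
    (t : ℝ) (ht0 : 0 ≤ t) (ht1 : t ≤ p / 2) :
    Integrable (fun ω => Real.exp (t * (Y ω : ℝ))) μ ∧
    (∫ ω, Real.exp (t * (Y ω : ℝ)) ∂μ) ≤ Real.exp (t / p) * Real.exp (t ^ 2 / p ^ 2) := by
  set q : ℝ := 1 - p with hq
  have hq0 : 0 ≤ q := by simp [hq]; linarith
  have hq1 : q < 1 := by simp [hq]; linarith
  have htlt1 : t < 1 := by linarith
  have h1t : 0 < 1 - t := by linarith
  have hptpos : 0 < p - t := by linarith
  -- exp t ≤ 1/(1-t)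
  have hexp_le : Real.exp t ≤ 1 / (1 - t) :=
    (le_div_iff₀ h1t).2 aux_exp_mul_one_sub_le
  set r : ℝ := q * Real.exp t with hrdef
  have hr0 : 0 ≤ r := mul_nonneg hq0 (Real.exp_pos t).le
  have hrle : r ≤ q / (1 - t) := by
    calc r ≤ q * (1 / (1 - t)) := mul_le_mul_of_nonneg_left hexp_le hq0
      _ = q / (1 - t) := by ring
  have hfrac : 1 - q / (1 - t) = (p - t) / (1 - t) := by
    field_simp
    ring
  have h1r_ge : (p - t) / (1 - t) ≤ 1 - r := by
    rw [← hfrac]; linarith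
  have h1rpos : 0 < 1 - r := lt_of_lt_of_le (div_pos hptpos h1t) h1r_ge
  have hrlt1 : r < 1 := by linarith
  -- the value of the sum
  set S : ℝ := p * Real.exp t * (1 - r)⁻¹ with hSdef
  have hS0 : 0 ≤ S := by positivity
  -- summability and sum of the series
  have hfun : (fun n : ℕ => Real.exp (t * ((n : ℝ) + 1)) * (q ^ n * p))
      = fun n : ℕ => (p * Real.exp t) * r ^ n := by
    funext n
    have : Real.exp (t * ((n : ℝ) + 1)) = Real.exp t ^ n * Real.exp t := by
      rw [mul_add, Real.exp_add, mul_one, mul_comm t (n : ℝ), Real.exp_nat_mul]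
    rw [this, hrdef, mul_pow]
    ring
  have hsummable : Summable (fun n : ℕ => Real.exp (t * ((n : ℝ) + 1)) * (q ^ n * p)) := by
    rw [hfun]
    exact (summable_geometric_of_lt_one hr0 hrlt1).mul_left _
  have htsumS : ∑' n : ℕ, Real.exp (t * ((n : ℝ) + 1)) * (q ^ n * p) = S := by
    rw [hfun, tsum_mul_left, tsum_geometric_of_lt_one hr0 hrlt1, hSdef]
  -- geometric sum of probabilities is 1
  have hqp_nonneg : ∀ n : ℕ, 0 ≤ q ^ n * p := fun n => mul_nonneg (pow_nonneg hq0 n) hp0.le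
  have hqp_summable : Summable (fun n : ℕ => q ^ n * p) :=
    (summable_geometric_of_lt_one hq0 hq1).mul_right _
  have hqp_sum : ∑' n : ℕ, q ^ n * p = 1 := by
    rw [tsum_mul_right, tsum_geometric_of_lt_one hq0 hq1]
    field_simp [hq]
    rw [hq, sub_sub_cancel, div_self hp0.ne']
  have hgeom' : ∀ n : ℕ, μ {ω | Y ω = n + 1} = ENNReal.ofReal (q ^ n * p) := by
    intro n
    have := hgeom (n + 1) (Nat.le_add_left 1 n)
    simpa using this
  -- the fibers
  have hmeasfib : ∀ n : ℕ, MeasurableSet (Y ⁻¹' {n}) :=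
    fun n => hmeas (measurableSet_singleton n)
  have hfib_eq : ∀ n : ℕ, Y ⁻¹' {n} = {ω | Y ω = n} := fun n => rfl
  -- total mass
  have htot : ∑' n : ℕ, μ (Y ⁻¹' {n}) = 1 := by
    rw [← measure_iUnion (fun i j hij => Set.disjoint_left.2
        (fun ω hi hj => hij (by simp at hi hj; rw [← hi, ← hj]))) hmeasfib]
    have : ⋃ n : ℕ, Y ⁻¹' {n} = Set.univ := by
      ext ω; simp
    rw [this, measure_univ]
  have htail : ∑' n : ℕ, μ (Y ⁻¹' {n + 1}) = 1 := by
    have : ∀ n : ℕ, μ (Y ⁻¹' {n + 1}) = ENNReal.ofReal (q ^ n * p) := fun n => hgeom' n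
    simp_rw [this]
    rw [← ENNReal.ofReal_tsum_of_nonneg hqp_nonneg hqp_summable, hqp_sum, ENNReal.ofReal_one]
  have hY0 : μ (Y ⁻¹' {0}) = 0 := by
    have hsplit := tsum_eq_zero_add' (f := fun n : ℕ => μ (Y ⁻¹' {n})) ENNReal.summable
    rw [htot, htail] at hsplit
    have h10 : (1 : ENNReal) + μ (Y ⁻¹' {0}) = 1 + 0 := by
      rw [add_zero, add_comm]; exact hsplit.symm
    exact (ENNReal.add_right_inj (by simp)).1 h10
  -- compute the lintegral
  have hL : ∫⁻ ω, ENNReal.ofReal (Real.exp (t * (Y ω : ℝ))) ∂μ = ENNReal.ofReal S := by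
    have hg : Measurable (fun n : ℕ => ENNReal.ofReal (Real.exp (t * (n : ℝ)))) :=
      measurable_from_top
    calc ∫⁻ ω, ENNReal.ofReal (Real.exp (t * (Y ω : ℝ))) ∂μ
        = ∫⁻ n, ENNReal.ofReal (Real.exp (t * (n : ℝ))) ∂(μ.map Y) :=
          (lintegral_map hg hmeas).symm
      _ = ∑' n : ℕ, ENNReal.ofReal (Real.exp (t * (n : ℝ))) * (μ.map Y) {n} :=
          lintegral_countable' _
      _ = ∑' n : ℕ, ENNReal.ofReal (Real.exp (t * (n : ℝ))) * μ (Y ⁻¹' {n}) := by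
          congr 1; funext n
          rw [Measure.map_apply hmeas (measurableSet_singleton n)]
      _ = ENNReal.ofReal S := by
          rw [tsum_eq_zero_add' ENNReal.summable, hY0, mul_zero, zero_add]
          have heach : ∀ n : ℕ,
              ENNReal.ofReal (Real.exp (t * ((n : ℕ) + 1 : ℕ))) * μ (Y ⁻¹' {n + 1})
                = ENNReal.ofReal (Real.exp (t * ((n : ℝ) + 1)) * (q ^ n * p)) := by
            intro n
            rw [hfib_eq (n + 1), hgeom' n, ← ENNReal.ofReal_mul (Real.exp_pos _).le]
            congr 2
            push_cast
            ring
          simp_rw [heach]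
          rw [← ENNReal.ofReal_tsum_of_nonneg
            (fun n => mul_nonneg (Real.exp_pos _).le (hqp_nonneg n)) hsummable, htsumS]
  -- measurability of the integrand
  have hfm : Measurable (fun ω => Real.exp (t * (Y ω : ℝ))) := by
    exact Real.measurable_exp.comp
      (measurable_const.mul ((measurable_from_top (f := fun n : ℕ => (n : ℝ))).comp hmeas))
  have hnn : 0 ≤ᵐ[μ] fun ω => Real.exp (t * (Y ω : ℝ)) :=
    Filter.Eventually.of_forall (fun ω => (Real.exp_pos _).le)
  have hint : Integrable (fun ω => Real.exp (t * (Y ω : ℝ))) μ := by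
    refine ⟨hfm.aestronglyMeasurable, ?_⟩
    rw [hasFiniteIntegral_iff_ofReal hnn, hL]
    exact ENNReal.ofReal_lt_top
  refine ⟨hint, ?_⟩
  have hIS : (∫ ω, Real.exp (t * (Y ω : ℝ)) ∂μ) = S := by
    rw [integral_eq_lintegral_of_nonneg_ae hnn hfm.aestronglyMeasurable, hL,
      ENNReal.toReal_ofReal hS0]
  rw [hIS]
  -- final analytic bound
  have hu0 : 0 ≤ t / p := div_nonneg ht0 hp0.le
  have hu1 : t / p ≤ 1 / 2 := by
    rw [div_le_div_iff₀ hp0 (by norm_num)]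
    linarith
  have hB := aux_inv_le_exp hu0 hu1
  have hE : Real.exp (t / p) * Real.exp (t ^ 2 / p ^ 2) = Real.exp (t / p + (t / p) ^ 2) := by
    rw [← Real.exp_add, div_pow]
  rw [hE]
  set E : ℝ := Real.exp (t / p + (t / p) ^ 2) with hEdef
  have hEpos : 0 < E := Real.exp_pos _
  have hinv : (1 - r)⁻¹ ≤ (1 - t) / (p - t) := by
    rw [← inv_div (p - t) (1 - t)]
    exact inv_anti₀ (div_pos hptpos h1t) h1r_ge
  have hstep1 : S ≤ p * Real.exp t * ((1 - t) / (p - t)) := by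
    apply mul_le_mul_of_nonneg_left hinv (by positivity)
  have hstep2 : p * Real.exp t * ((1 - t) / (p - t)) ≤ p / (p - t) := by
    have h2 : p * (Real.exp t * (1 - t)) ≤ p := by
      nlinarith [aux_exp_mul_one_sub_le (t := t)]
    calc p * Real.exp t * ((1 - t) / (p - t))
        = (p * (Real.exp t * (1 - t))) / (p - t) := by ring
      _ ≤ p / (p - t) := by gcongr
  have hstep3 : p / (p - t) ≤ E := by
    rw [div_le_iff₀ hptpos]
    have hmul : p * ((1 - t / p) * E) ≤ p * ((1 - t / p) * E) := le_refl _
    have hpe : p * (1 - t / p) = p - t := by field_simp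
    calc p = p * 1 := by ring
      _ ≤ p * ((1 - t / p) * E) := mul_le_mul_of_nonneg_left hB hp0.le
      _ = (p - t) * E := by rw [← mul_assoc, hpe]
      _ = E * (p - t) := by ring
  calc S ≤ p * Real.exp t * ((1 - t) / (p - t)) := hstep1
    _ ≤ p / (p - t) := hstep2
    _ ≤ E := hstep3
end

section
/- Let X₁, …, Xₙ be independent random variables where Xᵢ is geometrically distributed on {1, 2, 3, …} with success probability pᵢ ∈ (0, 1], let X := X₁ + ⋯ + Xₙ, and let s be a finite real number with ∑_{i=1}^n 1/pᵢ² ≤ s. Then for every δ > 0 and every t ≥ 0, P(X < E[X] − δ) ≤ exp(−tδ + t²s/2). -/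
open Real

lemma key_ineq {p t : ℝ} (hp0 : 0 < p) (hp1 : p ≤ 1) (ht : 0 ≤ t) :
    p * Real.exp (-t) / (1 - (1 - p) * Real.exp (-t)) ≤
      Real.exp (-(t / p) + t ^ 2 / (2 * p ^ 2)) := by
  set q : ℝ := 1 - p with hq
  have hq0 : 0 ≤ q := by simp [hq]; linarith
  have hq1 : q < 1 := by simp [hq]; linarith
  -- positivity of the denominator on [0, ∞)
  have hg : ∀ u : ℝ, 0 ≤ u → q * Real.exp (-u) < 1 := by
    intro u hu
    have h1 : Real.exp (-u) ≤ 1 := Real.exp_le_one_iff.mpr (by linarith)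
    calc q * Real.exp (-u) ≤ q * 1 := by
          exact mul_le_mul_of_nonneg_left h1 hq0
      _ < 1 := by linarith
  have hgpos : ∀ u : ℝ, 0 ≤ u → 0 < 1 - q * Real.exp (-u) := fun u hu => by
    linarith [hg u hu]
  set H : ℝ → ℝ := fun u => 1 + u / p ^ 2 - 1 / p + q * Real.exp (-u) / (1 - q * Real.exp (-u))
    with hH
  set G : ℝ → ℝ := fun u => u + u ^ 2 / (2 * p ^ 2) - u / p - Real.log p
      + Real.log (1 - q * Real.exp (-u)) with hG
  have hexp : ∀ u : ℝ, HasDerivAt (fun u : ℝ => Real.exp (-u)) (-Real.exp (-u)) u := by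
    intro u
    simpa using ((hasDerivAt_id u).neg.exp)
  have hden : ∀ u : ℝ, HasDerivAt (fun u : ℝ => 1 - q * Real.exp (-u)) (q * Real.exp (-u)) u := by
    intro u
    simpa using (((hexp u).const_mul q).const_sub 1)
  -- derivative of G is H
  have hGderiv : ∀ u : ℝ, 1 - q * Real.exp (-u) ≠ 0 → HasDerivAt G (H u) u := by
    intro u hu
    have h1 : HasDerivAt (fun u : ℝ => Real.log (1 - q * Real.exp (-u)))
        (q * Real.exp (-u) / (1 - q * Real.exp (-u))) u := (hden u).log hu
    have h2 : HasDerivAt (fun u : ℝ => u + u ^ 2 / (2 * p ^ 2) - u / p - Real.log p)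
        (1 + u / p ^ 2 - 1 / p) u := by
      have : HasDerivAt (fun u : ℝ => u + u ^ 2 / (2 * p ^ 2) - u / p - Real.log p)
          (1 + (2 * u) / (2 * p ^ 2) - 1 / p) u := by
        exact ((((hasDerivAt_id u).add (((hasDerivAt_pow 2 u)).div_const (2 * p ^ 2))).sub
          ((hasDerivAt_id u).div_const p)).sub_const (Real.log p)).congr_deriv (by ring_nf)
      convert this using 1
      field_simp
    exact h2.add h1
  -- derivative of H
  have hHderiv : ∀ u : ℝ, 1 - q * Real.exp (-u) ≠ 0 → HasDerivAt H
      (1 / p ^ 2 + ((-(q * Real.exp (-u))) * (1 - q * Real.exp (-u)) -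
        q * Real.exp (-u) * (q * Real.exp (-u))) / (1 - q * Real.exp (-u)) ^ 2) u := by
    intro u hu
    have h1 : HasDerivAt (fun u : ℝ => q * Real.exp (-u)) (-(q * Real.exp (-u))) u := by
      simpa [mul_comm, neg_mul, mul_neg] using (hexp u).const_mul q
    have h2 := h1.div (hden u) hu
    have h3 : HasDerivAt (fun u : ℝ => 1 + u / p ^ 2 - 1 / p) (1 / p ^ 2) u := by
      simpa using (((hasDerivAt_id u).div_const (p ^ 2)).const_add 1).sub_const (1 / p)
    exact h3.add h2
  -- H is nonneg on [0, ∞)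
  have hH0 : H 0 = 0 := by
    have : (1 : ℝ) - q * Real.exp (-0) = p := by simp [hq]
    rw [hH]
    simp only [Real.exp_zero, mul_one, neg_zero] at this ⊢
    rw [this]
    field_simp [hq]
    rw [hq]; ring
  have hHnonneg : ∀ u : ℝ, 0 ≤ u → 0 ≤ H u := by
    intro u hu
    have hmono : MonotoneOn H (Set.Ici 0) := by
      apply monotoneOn_of_deriv_nonneg (convex_Ici 0)
      · intro x hx
        exact ((hHderiv x (hgpos x hx).ne').continuousAt).continuousWithinAt
      · intro x hx
        rw [interior_Ici] at hx
        exact ((hHderiv x (hgpos x hx.le).ne').differentiableAt).differentiableWithinAt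
      · intro x hx
        rw [interior_Ici] at hx
        have hx' : (0:ℝ) ≤ x := hx.le
        rw [(hHderiv x (hgpos x hx').ne').deriv]
        set r : ℝ := q * Real.exp (-x) with hr
        have hr0 : 0 ≤ r := mul_nonneg hq0 (Real.exp_pos _).le
        have hrq : r ≤ q := by
          have : Real.exp (-x) ≤ 1 := Real.exp_le_one_iff.mpr (by linarith)
          calc r ≤ q * 1 := mul_le_mul_of_nonneg_left this hq0
            _ = q := mul_one q
        have hrp : p ≤ 1 - r := by
          have : q * Real.exp (-x) ≤ q := hrq
          simp [hq] at this ⊢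
          linarith
        have h1r : 0 < 1 - r := lt_of_lt_of_le hp0 hrp
        -- need : 0 ≤ 1/p^2 + (-r(1-r) - r*r)/(1-r)^2 = 1/p^2 - r/(1-r)^2
        have key : r * p ^ 2 ≤ (1 - r) ^ 2 := by
          have h1 : r * p ^ 2 ≤ q * p ^ 2 := by nlinarith
          have hpsq : p ^ 2 ≤ (1 - r) ^ 2 := by nlinarith
          have h2 : q * p ^ 2 ≤ q * (1 - r) ^ 2 := mul_le_mul_of_nonneg_left hpsq hq0
          have h3 : q * (1 - r) ^ 2 ≤ 1 * (1 - r) ^ 2 := by nlinarith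
          linarith
        have e1 : (-r * (1 - r) - r * r) / (1 - r) ^ 2 = -(r / (1 - r) ^ 2) := by
          field_simp
          ring
        rw [e1]
        have : r / (1 - r) ^ 2 ≤ 1 / p ^ 2 := by
          rw [div_le_div_iff₀ (by positivity) (by positivity)]
          linarith
        linarith
    have := hmono (Set.self_mem_Ici) hu hu
    rw [hH0] at this
    exact this
  -- G is nonneg on [0, ∞)
  have hG0 : G 0 = 0 := by
    rw [hG]
    simp [hq]
  have hGnonneg : 0 ≤ G t := by
    have hmono : MonotoneOn G (Set.Ici 0) := by
      apply monotoneOn_of_deriv_nonneg (convex_Ici 0)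
      · intro x hx
        exact ((hGderiv x (hgpos x hx).ne').continuousAt).continuousWithinAt
      · intro x hx
        rw [interior_Ici] at hx
        exact ((hGderiv x (hgpos x hx.le).ne').differentiableAt).differentiableWithinAt
      · intro x hx
        rw [interior_Ici] at hx
        rw [(hGderiv x (hgpos x hx.le).ne').deriv]
        exact hHnonneg x hx.le
    have := hmono (Set.self_mem_Ici) ht ht
    rw [hG0] at this
    exact this
  -- conclude
  have hgt : 0 < 1 - q * Real.exp (-t) := hgpos t ht
  have hlhs : 0 < p * Real.exp (-t) / (1 - q * Real.exp (-t)) := by positivity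
  rw [← Real.exp_log hlhs]
  apply Real.exp_le_exp.mpr
  rw [Real.log_div (by positivity) hgt.ne', Real.log_mul hp0.ne' (Real.exp_pos _).ne',
    Real.log_exp]
  rw [hG] at hGnonneg
  have hp2 : t ^ 2 / (2 * p ^ 2) = t ^ 2 / (2 * p ^ 2) := rfl
  linarith

open MeasureTheory Real

lemma integrable_of_summable_nat {g : ℕ → ℝ} {ν : Measure ℕ} [IsFiniteMeasure ν]
    (hg : Summable (fun j => ‖g j‖ * (ν {j}).toReal)) : Integrable g ν := by
  refine ⟨(measurable_from_top.mono le_top le_rfl).aestronglyMeasurable, ?_⟩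
  rw [HasFiniteIntegral, lintegral_countable']
  have heq : ∀ a : ℕ, ‖g a‖ₑ * ν {a}
      = ENNReal.ofReal (‖g a‖ * (ν {a}).toReal) := by
    intro a
    rw [ENNReal.ofReal_mul (norm_nonneg _), ofReal_norm,
      ENNReal.ofReal_toReal (measure_ne_top ν _)]
  rw [tsum_congr heq, ← ENNReal.ofReal_tsum_of_nonneg
    (fun a => mul_nonneg (norm_nonneg _) ENNReal.toReal_nonneg) hg]
  exact ENNReal.ofReal_lt_top

lemma nu_univ_eq (ν : Measure ℕ) [IsProbabilityMeasure ν] : (1 : ENNReal) = ∑' j : ℕ, ν {j} := by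
  rw [← measure_univ (μ := ν), ← Set.iUnion_of_singleton ℕ]
  exact measure_iUnion (fun i j hij => Set.disjoint_singleton.mpr hij)
    (fun i => measurableSet_singleton i)

lemma geom_facts {p : ℝ} (hp0 : 0 < p) (hp1 : p ≤ 1) (ν : Measure ℕ) [IsProbabilityMeasure ν]
    (hν : ∀ j : ℕ, 1 ≤ j → ν {j} = ENNReal.ofReal ((1 - p) ^ (j - 1) * p)) :
    (Integrable (fun j : ℕ => (j : ℝ)) ν ∧ ∫ j, (j : ℝ) ∂ν = 1 / p) ∧
      (∀ t : ℝ, 0 ≤ t → ∫ j, Real.exp (-t * (j : ℝ)) ∂ν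
        = p * Real.exp (-t) / (1 - (1 - p) * Real.exp (-t))) := by
  set q : ℝ := 1 - p with hqdef
  have hq0 : 0 ≤ q := by simp only [hqdef]; linarith
  have hq1 : q < 1 := by simp only [hqdef]; linarith
  have hq1' : (0:ℝ) < 1 - q := by linarith
  have hqn : ‖q‖ < 1 := by rwa [Real.norm_eq_abs, abs_of_nonneg hq0]
  have hsucc : ∀ k : ℕ, ν {k + 1} = ENNReal.ofReal (q ^ k * p) := by
    intro k
    simpa using hν (k + 1) (Nat.le_add_left 1 k)
  have hsum_geom : Summable (fun k : ℕ => q ^ k * p) :=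
    (summable_geometric_of_lt_one hq0 hq1).mul_right p
  have htsum_geom : ∑' k : ℕ, q ^ k * p = 1 := by
    rw [tsum_mul_right, tsum_geometric_of_lt_one hq0 hq1, hqdef]
    field_simp
    rw [sub_sub_cancel, div_self hp0.ne']
  -- ν {0} = 0
  have h0 : ν {0} = 0 := by
    have huniv := nu_univ_eq ν
    have hshift : ∑' j : ℕ, ν {j} = ν {0} + ∑' k : ℕ, ν {k + 1} :=
      tsum_eq_zero_add' ENNReal.summable
    have htail : ∑' k : ℕ, ν {k + 1} = 1 := by
      rw [tsum_congr hsucc, ← ENNReal.ofReal_tsum_of_nonneg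
        (fun k => mul_nonneg (pow_nonneg hq0 k) hp0.le) hsum_geom, htsum_geom]
      simp
    rw [hshift, htail] at huniv
    have h1 : ν {0} + 1 = 0 + 1 := by rw [zero_add]; exact huniv.symm
    exact (ENNReal.add_left_inj ENNReal.one_ne_top).mp h1
  have htoReal : ∀ k : ℕ, (ν {k + 1}).toReal = q ^ k * p := by
    intro k
    rw [hsucc k, ENNReal.toReal_ofReal (by positivity)]
  have h0r : (ν {0}).toReal = 0 := by rw [h0]; simp
  constructor
  · -- mean
    have h1 : Summable (fun k : ℕ => (k:ℝ) * q ^ k) := by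
      simpa using summable_pow_mul_geometric_of_norm_lt_one 1 hqn (R := ℝ)
    have h2 : Summable (fun k : ℕ => q ^ k) := summable_geometric_of_lt_one hq0 hq1
    have hsum1 : Summable (fun k : ℕ => ((k:ℝ) + 1) * (q ^ k * p)) := by
      refine ((h1.add h2).mul_right p).congr fun k => ?_
      push_cast
      ring
    have htsum1 : ∑' k : ℕ, ((k:ℝ) + 1) * (q ^ k * p) = 1 / p := by
      have e : ∀ k : ℕ, ((k:ℝ) + 1) * (q ^ k * p) = ((k:ℝ) * q ^ k + q ^ k) * p := by
        intro k; ring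
      rw [tsum_congr e, tsum_mul_right, Summable.tsum_add h1 h2,
        tsum_coe_mul_geometric_of_norm_lt_one hqn, tsum_geometric_of_lt_one hq0 hq1]
      have hp' : (1:ℝ) - q = p := by simp [hqdef]
      rw [hp']
      field_simp
      rw [hqdef]
      ring
    have hsumf : Summable (fun j : ℕ => (ν {j}).toReal * (j:ℝ)) := by
      rw [← summable_nat_add_iff 1]
      refine hsum1.congr fun k => ?_
      rw [htoReal k]
      push_cast
      ring
    have hint : Integrable (fun j : ℕ => (j : ℝ)) ν := by
      apply integrable_of_summable_nat
      refine hsumf.congr fun j => ?_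
      rw [Real.norm_of_nonneg (by positivity)]
      ring
    refine ⟨hint, ?_⟩
    rw [integral_countable' hint]
    simp_rw [smul_eq_mul, measureReal_def]
    rw [Summable.tsum_eq_zero_add hsumf, h0r]
    simp only [zero_mul, zero_add]
    rw [← htsum1]
    refine tsum_congr fun k => ?_
    rw [htoReal k]
    push_cast
    ring
  · -- mgf
    intro t ht
    set r : ℝ := q * Real.exp (-t) with hrdef
    have hr0 : 0 ≤ r := mul_nonneg hq0 (Real.exp_pos _).le
    have hr1 : r < 1 := by
      have h1 : Real.exp (-t) ≤ 1 := Real.exp_le_one_iff.mpr (by linarith)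
      calc r ≤ q * 1 := mul_le_mul_of_nonneg_left h1 hq0
        _ < 1 := by linarith
    have hexpk : ∀ k : ℕ, Real.exp (-t * ((k:ℝ) + 1)) = Real.exp (-t) * Real.exp (-t) ^ k := by
      intro k
      rw [← Real.exp_nat_mul, ← Real.exp_add]
      ring_nf
    have hsumr : Summable (fun k : ℕ => p * Real.exp (-t) * r ^ k) :=
      (summable_geometric_of_lt_one hr0 hr1).mul_left _
    have hsumf : Summable (fun j : ℕ => (ν {j}).toReal * Real.exp (-t * (j:ℝ))) := by
      rw [← summable_nat_add_iff 1]
      refine hsumr.congr fun k => ?_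
      rw [htoReal k]
      push_cast
      rw [hexpk k, hrdef, mul_pow]
      ring
    have hint : Integrable (fun j : ℕ => Real.exp (-t * (j:ℝ))) ν := by
      apply integrable_of_summable_nat
      refine hsumf.congr fun j => ?_
      rw [Real.norm_of_nonneg (Real.exp_pos _).le]
      ring
    rw [integral_countable' hint]
    simp_rw [smul_eq_mul, measureReal_def]
    rw [Summable.tsum_eq_zero_add hsumf, h0r]
    simp only [zero_mul, zero_add]
    have hstep : ∀ k : ℕ, (ν {k + 1}).toReal * Real.exp (-t * ((k + 1 : ℕ):ℝ))
        = p * Real.exp (-t) * r ^ k := by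
      intro k
      rw [htoReal k]
      push_cast
      rw [hexpk k, hrdef, mul_pow]
      ring
    rw [tsum_congr hstep, tsum_mul_left, tsum_geometric_of_lt_one hr0 hr1, hrdef]
    rw [div_eq_mul_inv]

open MeasureTheory ProbabilityTheory

theorem geometric_sum_lower_tail_param
    {Ω : Type*} [MeasurableSpace Ω] (μ : Measure Ω) [IsProbabilityMeasure μ]
    (n : ℕ) (X : Fin n → Ω → ℕ) (p : Fin n → ℝ)
    (hp0 : ∀ i, 0 < p i) (hp1 : ∀ i, p i ≤ 1)
    (hmeas : ∀ i, Measurable (X i))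
    (hgeom : ∀ i, ∀ j : ℕ, 1 ≤ j →
      μ {ω | X i ω = j} = ENNReal.ofReal ((1 - p i) ^ (j - 1) * p i))
    (hindep : iIndepFun X μ)
    (s : ℝ) (hs : ∑ i, 1 / (p i) ^ 2 ≤ s)
    (δ : ℝ) (hδ : 0 < δ) (t : ℝ) (ht : 0 ≤ t) :
    μ {ω | (∑ i, (X i ω : ℝ)) < (∫ ω, ∑ i, (X i ω : ℝ) ∂μ) - δ}
      ≤ ENNReal.ofReal (Real.exp (-t * δ + t ^ 2 * s / 2)) := by
  classical
  set Y : Fin n → Ω → ℝ := fun i ω => (X i ω : ℝ) with hY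
  have hmeasY : ∀ i, Measurable (Y i) := fun i => measurable_from_top.comp (hmeas i)
  -- facts for each coordinate
  have hfacts : ∀ i, (Integrable (Y i) μ ∧ ∫ ω, Y i ω ∂μ = 1 / p i) ∧
      ∫ ω, Real.exp (-t * Y i ω) ∂μ
        = p i * Real.exp (-t) / (1 - (1 - p i) * Real.exp (-t)) := by
    intro i
    set ν : Measure ℕ := μ.map (X i) with hν
    have : IsProbabilityMeasure ν := Measure.isProbabilityMeasure_map (hmeas i).aemeasurable
    have hνj : ∀ j : ℕ, 1 ≤ j → ν {j} = ENNReal.ofReal ((1 - p i) ^ (j - 1) * p i) := by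
      intro j hj
      rw [hν, Measure.map_apply (hmeas i) (measurableSet_singleton j)]
      exact (hgeom i j hj)
    obtain ⟨⟨hint, hmean⟩, hmgf⟩ := geom_facts (hp0 i) (hp1 i) ν hνj
    have hInt : Integrable (Y i) μ := by
      have := (integrable_map_measure
        (f := X i) (g := fun j : ℕ => (j : ℝ))
        measurable_from_top.aestronglyMeasurable (hmeas i).aemeasurable).mp hint
      exact this
    refine ⟨⟨hInt, ?_⟩, ?_⟩
    · rw [← hmean, hν, integral_map (hmeas i).aemeasurable
        measurable_from_top.aestronglyMeasurable]
    · rw [← hmgf t ht, hν, integral_map (hmeas i).aemeasurable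
        (measurable_from_top.aestronglyMeasurable)]
  set m : ℝ := ∫ ω, ∑ i, (X i ω : ℝ) ∂μ with hm
  have hIntY : ∀ i, Integrable (Y i) μ := fun i => ((hfacts i).1).1
  have hmval : m = ∑ i, 1 / p i := by
    rw [hm]
    rw [integral_finset_sum Finset.univ (fun i _ => hIntY i)]
    exact Finset.sum_congr rfl fun i _ => ((hfacts i).1).2
  -- Chernoff
  have hSapp : (∑ i, Y i) = fun ω => ∑ i, Y i ω := by
    ext ω
    simp [Finset.sum_apply]
  have hSmeas : Measurable (∑ i, Y i) := by
    rw [hSapp]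
    exact Finset.measurable_sum Finset.univ (fun i _ => hmeasY i)
  have hSnonneg : ∀ ω, 0 ≤ (∑ i, Y i) ω := by
    intro ω
    rw [Finset.sum_apply]
    exact Finset.sum_nonneg fun i _ => (Nat.cast_nonneg _ : (0:ℝ) ≤ (X i ω : ℝ))
  have hIntexp : Integrable (fun ω => Real.exp (-t * (∑ i, Y i) ω)) μ := by
    refine Integrable.mono' (integrable_const 1)
      ((hSmeas.const_mul (-t)).exp.aestronglyMeasurable) (ae_of_all μ fun ω => ?_)
    rw [Real.norm_of_nonneg (Real.exp_pos _).le]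
    exact Real.exp_le_one_iff.mpr (mul_nonpos_of_nonpos_of_nonneg (by linarith) (hSnonneg ω))
  have hcher := measure_le_le_exp_mul_mgf (μ := μ) (X := ∑ i, Y i) (m - δ)
    (t := -t) (by linarith) hIntexp
  -- independence of the Y's
  have hindepY : iIndepFun Y μ :=
    hindep.comp (fun _ (j : ℕ) => (j : ℝ)) (fun _ => measurable_from_top)
  have hmgfsum : mgf (∑ i, Y i) μ (-t) = ∏ i, mgf (Y i) μ (-t) :=
    hindepY.mgf_sum hmeasY Finset.univ
  have hmgfi : ∀ i, mgf (Y i) μ (-t)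
      = p i * Real.exp (-t) / (1 - (1 - p i) * Real.exp (-t)) := by
    intro i
    rw [mgf]
    exact (hfacts i).2
  -- bound the product
  have hprod : ∏ i, mgf (Y i) μ (-t)
      ≤ ∏ i, Real.exp (-(t / p i) + t ^ 2 / (2 * (p i) ^ 2)) := by
    refine Finset.prod_le_prod (fun i _ => ?_) (fun i _ => ?_)
    · rw [hmgfi i]
      have h1 : (1 - p i) * Real.exp (-t) < 1 := by
        have he : Real.exp (-t) ≤ 1 := Real.exp_le_one_iff.mpr (by linarith)
        calc (1 - p i) * Real.exp (-t) ≤ (1 - p i) * 1 :=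
              mul_le_mul_of_nonneg_left he (by linarith [hp1 i])
          _ < 1 := by linarith [hp0 i]
      have h2 : (0:ℝ) < 1 - (1 - p i) * Real.exp (-t) := by linarith
      have h3 : (0:ℝ) < p i * Real.exp (-t) := mul_pos (hp0 i) (Real.exp_pos _)
      exact (div_pos h3 h2).le
    · rw [hmgfi i]
      exact key_ineq (hp0 i) (hp1 i) ht
  have hprodexp : ∏ i, Real.exp (-(t / p i) + t ^ 2 / (2 * (p i) ^ 2))
      = Real.exp (∑ i, (-(t / p i) + t ^ 2 / (2 * (p i) ^ 2))) :=
    (Real.exp_sum _ _).symm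
  -- sum computation
  have hsumexp : ∑ i, (-(t / p i) + t ^ 2 / (2 * (p i) ^ 2))
      = -t * (∑ i, 1 / p i) + (t ^ 2 / 2) * ∑ i, 1 / (p i) ^ 2 := by
    rw [Finset.mul_sum, Finset.mul_sum, ← Finset.sum_add_distrib]
    refine Finset.sum_congr rfl fun i _ => ?_
    have := (hp0 i).ne'
    field_simp
  -- put the real bound together
  have hreal : Real.exp (-(-t) * (m - δ)) * mgf (∑ i, Y i) μ (-t)
      ≤ Real.exp (-t * δ + t ^ 2 * s / 2) := by
    rw [hmgfsum]
    calc Real.exp (-(-t) * (m - δ)) * ∏ i, mgf (Y i) μ (-t)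
        ≤ Real.exp (-(-t) * (m - δ)) * ∏ i, Real.exp (-(t / p i) + t ^ 2 / (2 * (p i) ^ 2)) := by
          exact mul_le_mul_of_nonneg_left hprod (Real.exp_pos _).le
      _ = Real.exp (-(-t) * (m - δ) + (-t * (∑ i, 1 / p i) + (t ^ 2 / 2) * ∑ i, 1 / (p i) ^ 2)) := by
          rw [hprodexp, hsumexp, ← Real.exp_add]
      _ ≤ Real.exp (-t * δ + t ^ 2 * s / 2) := by
          apply Real.exp_le_exp.mpr
          rw [hmval]
          have ht2 : (0:ℝ) ≤ t ^ 2 / 2 := by positivity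
          set A := ∑ i, 1 / p i with hA
          set B := ∑ i, 1 / (p i) ^ 2 with hB
          have hAB : - -t * (A - δ) + (-t * A + t ^ 2 / 2 * B) = -t * δ + t ^ 2 / 2 * B := by
            ring
          rw [hAB]
          have h4 : t ^ 2 / 2 * B ≤ t ^ 2 / 2 * s := mul_le_mul_of_nonneg_left hs ht2
          linarith
  -- combine
  have hsub : μ {ω | (∑ i, (X i ω : ℝ)) < m - δ} ≤ μ {ω | (∑ i, Y i) ω ≤ m - δ} := by
    apply measure_mono
    intro ω hω
    simp only [Set.mem_setOf_eq, Finset.sum_apply] at hω ⊢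
    exact le_of_lt hω
  refine le_trans hsub ?_
  rw [← ENNReal.ofReal_toReal (measure_ne_top μ _)]
  exact ENNReal.ofReal_le_ofReal (le_trans hcher hreal)
end

section
/- Let X₁, …, Xₙ be independent random variables where Xᵢ is geometrically distributed on {1, 2, 3, …} with success probability pᵢ ∈ (0, 1], let X := X₁ + ⋯ + Xₙ, let s be a finite real number with ∑_{i=1}^n 1/pᵢ² ≤ s, and let h := min{pᵢ : i = 1, …, n}. Then for every δ > 0 and every t with 0 ≤ t ≤ h/2, P(X > E[X] + δ) ≤ exp(−tδ + t²s). -/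
open MeasureTheory ProbabilityTheory

section GeomAux

lemma geom_qexp_lt_one {p t : ℝ} (hp0 : 0 < p) (hp1 : p ≤ 1) (ht0 : 0 ≤ t)
    (ht : t ≤ p / 2) : (1 - p) * Real.exp t < 1 := by
  have hm : Real.exp t ≤ Real.exp (p / 2) := Real.exp_le_exp.2 ht
  have h2 : 1 - p / 2 < Real.exp (-(p / 2)) := by
    have := Real.add_one_lt_exp (x := -(p / 2)) (by simp; positivity)
    linarith
  have h3 : Real.exp (-(p / 2)) * Real.exp (p / 2) = 1 := by
    rw [← Real.exp_add]; simp
  have h4 := Real.exp_pos (p / 2)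
  have h5 := Real.exp_pos t
  nlinarith [mul_lt_mul_of_pos_right h2 h4]

lemma geom_exp_sub_one_le {x : ℝ} : Real.exp x - 1 ≤ x * Real.exp x := by
  have h1 := Real.add_one_le_exp (-x)
  have h2 : Real.exp (-x) * Real.exp x = 1 := by rw [← Real.exp_add]; simp
  have h3 := Real.exp_pos x
  nlinarith

lemma geom_mgf_le {p t : ℝ} (hp0 : 0 < p) (hp1 : p ≤ 1) (ht0 : 0 ≤ t)
    (ht : t ≤ p / 2) :
    p * Real.exp t / (1 - (1 - p) * Real.exp t) ≤ Real.exp (t / p + t ^ 2 / p ^ 2) := by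
  set q : ℝ := 1 - p with hq
  have hq0 : 0 ≤ q := by simp [hq]; linarith
  set f : ℝ → ℝ := fun x => x / p + x ^ 2 / p ^ 2 + Real.log (1 - q * Real.exp x) - x with hf
  have hDpos : ∀ x ∈ Set.Icc (0:ℝ) (p / 2), 0 < 1 - q * Real.exp x := fun x hx => by
    have := geom_qexp_lt_one hp0 hp1 hx.1 hx.2
    simp only [hq]
    linarith
  have hderiv : ∀ x ∈ Set.Icc (0:ℝ) (p / 2),
      HasDerivAt f (1 / p + 2 * x / p ^ 2 + (-(q * Real.exp x)) / (1 - q * Real.exp x) - 1) x := by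
    intro x hx
    have h1 : HasDerivAt (fun x : ℝ => x / p) (1 / p) x := (hasDerivAt_id x).div_const p
    have h2 : HasDerivAt (fun x : ℝ => x ^ 2 / p ^ 2) (2 * x / p ^ 2) x := by
      have := (hasDerivAt_pow 2 x).div_const (p ^ 2)
      simpa using this
    have h3 : HasDerivAt (fun x : ℝ => 1 - q * Real.exp x) (-(q * Real.exp x)) x := by
      simpa using ((Real.hasDerivAt_exp x).const_mul q).const_sub 1
    have h4 : HasDerivAt (fun x : ℝ => Real.log (1 - q * Real.exp x))
        ((-(q * Real.exp x)) / (1 - q * Real.exp x)) x := by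
      have := h3.log (ne_of_gt (hDpos x hx))
      simpa [div_eq_mul_inv] using this
    exact ((h1.add h2).add h4).sub (hasDerivAt_id' x)
  have hmono : MonotoneOn f (Set.Icc 0 (p / 2)) := by
    apply monotoneOn_of_deriv_nonneg (convex_Icc _ _)
    · intro x hx
      exact ((hderiv x hx).continuousAt).continuousWithinAt
    · intro x hx
      have hx' : x ∈ Set.Icc (0:ℝ) (p/2) := interior_subset hx
      exact ((hderiv x hx').differentiableAt).differentiableWithinAt
    · intro x hx
      rw [interior_Icc] at hx
      have hx' : x ∈ Set.Icc (0:ℝ) (p/2) := ⟨hx.1.le, hx.2.le⟩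
      rw [(hderiv x hx').deriv]
      have hD := hDpos x hx'
      have hu : Real.exp x - 1 ≤ x * Real.exp x := geom_exp_sub_one_le
      have hqe : q * Real.exp x < 1 := by linarith
      have hxx : 0 ≤ x := hx.1.le
      have hx2 : x ≤ p / 2 := hx.2.le
      have hkey : p ^ 2 ≤ (p + 2 * x) * (1 - q * Real.exp x) := by
        have hE := Real.exp_pos x
        nlinarith [mul_nonneg hxx hq0, mul_nonneg (mul_nonneg hxx hq0) hE.le,
          mul_le_mul_of_nonneg_left hu hq0]
      rw [sub_nonneg]
      have h1D : 1 / (1 - q * Real.exp x) ≤ (p + 2 * x) / p ^ 2 := by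
        rw [div_le_div_iff₀ hD (by positivity)]
        linarith
      have hinv : (-(q * Real.exp x)) / (1 - q * Real.exp x)
          = 1 - 1 / (1 - q * Real.exp x) := by
        field_simp
        ring
      have hsplit2 : (p + 2 * x) / p ^ 2 = 1 / p + 2 * x / p ^ 2 := by
        field_simp
      linarith [h1D, hinv, hsplit2]
  have h0 : f 0 ≤ f t := hmono (Set.left_mem_Icc.2 (by linarith)) ⟨ht0, ht⟩ ht0
  have hf0 : f 0 = Real.log p := by
    simp [hf, hq]
  have hDt : 0 < 1 - q * Real.exp t := hDpos t ⟨ht0, ht⟩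
  have hlog : Real.log (p * Real.exp t / (1 - q * Real.exp t)) ≤ t / p + t ^ 2 / p ^ 2 := by
    rw [Real.log_div (by positivity) (ne_of_gt hDt),
      Real.log_mul (ne_of_gt hp0) (Real.exp_ne_zero t), Real.log_exp]
    have h0' := h0
    rw [hf0] at h0'
    simp only [hf] at h0'
    linarith
  calc p * Real.exp t / (1 - q * Real.exp t)
      = Real.exp (Real.log (p * Real.exp t / (1 - q * Real.exp t))) := by
        rw [Real.exp_log (by positivity)]
    _ ≤ Real.exp (t / p + t ^ 2 / p ^ 2) := Real.exp_le_exp.2 hlog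

/-- The measure of `{0}` vanishes for a geometric-on-`{1,2,...}` law. -/
lemma geom_nu_zero {p : ℝ} (hp0 : 0 < p) (hp1 : p ≤ 1) (ν : Measure ℕ)
    [IsProbabilityMeasure ν]
    (hν : ∀ j : ℕ, ν {j + 1} = ENNReal.ofReal ((1 - p) ^ j * p)) : ν {0} = 0 := by
  have hq0 : (0:ℝ) ≤ 1 - p := by linarith
  have hq1 : (1 - p : ℝ) < 1 := by linarith
  have hsum : Summable (fun j : ℕ => (1 - p) ^ j * p) :=
    (summable_geometric_of_lt_one hq0 hq1).mul_right p
  have htsum : ∑' j : ℕ, (1 - p) ^ j * p = 1 := by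
    rw [tsum_mul_right, tsum_geometric_of_lt_one hq0 hq1]
    have : (1 : ℝ) - (1 - p) = p := by ring
    rw [this]
    field_simp
  have huniv : ν Set.univ = ∑' j : ℕ, ν {j} := by
    rw [← Set.iUnion_of_singleton ℕ]
    exact measure_iUnion (fun i j hij => by simpa using hij)
      (fun j => measurableSet_singleton j)
  have hshift : ∑' j : ℕ, ν {j} = ν {0} + ∑' j : ℕ, ν {j + 1} :=
    tsum_eq_zero_add' ENNReal.summable
  have htail : ∑' j : ℕ, ν {j + 1} = 1 := by
    have : ∑' j : ℕ, ν {j + 1} = ∑' j : ℕ, ENNReal.ofReal ((1 - p) ^ j * p) :=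
      tsum_congr fun j => hν j
    rw [this, ← ENNReal.ofReal_tsum_of_nonneg
      (fun j => mul_nonneg (pow_nonneg hq0 j) hp0.le) hsum, htsum, ENNReal.ofReal_one]
  have h1 : ν {0} + 1 = 1 := by
    conv_lhs => rw [← htail, ← hshift, ← huniv]
    rw [measure_univ]
  have hfin : ν {0} ≠ ⊤ := measure_ne_top ν _
  have h2 := congrArg ENNReal.toReal h1
  rw [ENNReal.toReal_add hfin (by simp)] at h2
  simp only [ENNReal.toReal_one] at h2
  have h0 : (ν {0}).toReal = 0 := by linarith
  exact (ENNReal.toReal_eq_zero_iff _).mp h0 |>.resolve_right hfin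

/-- Integrability and integral computation for nonnegative functions against a
geometric-on-`{1,2,...}` law. -/
lemma geom_integral {p : ℝ} (hp0 : 0 < p) (hp1 : p ≤ 1) (ν : Measure ℕ)
    [IsProbabilityMeasure ν]
    (hν : ∀ j : ℕ, ν {j + 1} = ENNReal.ofReal ((1 - p) ^ j * p))
    (g : ℕ → ℝ) (hg : ∀ j, 0 ≤ g j)
    (hsum : Summable fun j => g (j + 1) * ((1 - p) ^ j * p)) :
    Integrable g ν ∧ ∫ j, g j ∂ν = ∑' j : ℕ, g (j + 1) * ((1 - p) ^ j * p) := by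
  have hq0 : (0:ℝ) ≤ 1 - p := by linarith
  have hterm : ∀ j : ℕ, (0:ℝ) ≤ (1 - p) ^ j * p :=
    fun j => mul_nonneg (pow_nonneg hq0 j) hp0.le
  have hzero : ν {0} = 0 := geom_nu_zero hp0 hp1 ν hν
  have hInt : Integrable g ν := by
    refine ⟨(measurable_of_countable g).aestronglyMeasurable, ?_⟩
    rw [hasFiniteIntegral_iff_norm, lintegral_countable']
    have hshift : ∑' j : ℕ, ENNReal.ofReal ‖g j‖ * ν {j}
        = ENNReal.ofReal ‖g 0‖ * ν {0}
          + ∑' j : ℕ, ENNReal.ofReal ‖g (j + 1)‖ * ν {j + 1} :=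
      tsum_eq_zero_add' ENNReal.summable
    rw [hshift, hzero, mul_zero, zero_add]
    have : ∑' j : ℕ, ENNReal.ofReal ‖g (j + 1)‖ * ν {j + 1}
        = ∑' j : ℕ, ENNReal.ofReal (g (j + 1) * ((1 - p) ^ j * p)) := by
      refine tsum_congr fun j => ?_
      rw [hν j, Real.norm_of_nonneg (hg _), ← ENNReal.ofReal_mul (hg _)]
    rw [this, ← ENNReal.ofReal_tsum_of_nonneg
      (fun j => mul_nonneg (hg _) (hterm j)) hsum]
    exact ENNReal.ofReal_lt_top
  refine ⟨hInt, ?_⟩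
  rw [integral_countable' hInt]
  simp only [measureReal_def]
  have hsum' : Summable fun j : ℕ => (ν {j + 1}).toReal • g (j + 1) := by
    refine hsum.congr fun j => ?_
    rw [hν j, ENNReal.toReal_ofReal (hterm j)]
    simp [mul_comm]
  have hS : Summable fun j : ℕ => (ν {j}).toReal • g j := (summable_nat_add_iff 1).mp hsum'
  rw [Summable.tsum_eq_zero_add hS, hzero]
  simp only [ENNReal.toReal_zero, zero_smul, zero_add]
  refine tsum_congr fun j => ?_
  rw [hν j, ENNReal.toReal_ofReal (hterm j)]
  simp [mul_comm]

end GeomAux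

theorem geometric_sum_upper_tail_param
    {Ω : Type*} [MeasurableSpace Ω] (μ : Measure Ω) [IsProbabilityMeasure μ]
    (n : ℕ) (X : Fin n → Ω → ℕ) (p : Fin n → ℝ)
    (hp0 : ∀ i, 0 < p i) (hp1 : ∀ i, p i ≤ 1)
    (hmeas : ∀ i, Measurable (X i))
    (hgeom : ∀ i, ∀ j : ℕ, 1 ≤ j →
      μ {ω | X i ω = j} = ENNReal.ofReal ((1 - p i) ^ (j - 1) * p i))
    (hindep : iIndepFun X μ)
    (s : ℝ) (hs : ∑ i, 1 / (p i) ^ 2 ≤ s)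
    (h : ℝ) (hmin : IsLeast (Set.range p) h)
    (δ : ℝ) (hδ : 0 < δ) (t : ℝ) (ht0 : 0 ≤ t) (ht1 : t ≤ h / 2) :
    μ {ω | (∑ i, (X i ω : ℝ)) > (∫ ω, ∑ i, (X i ω : ℝ) ∂μ) + δ}
      ≤ ENNReal.ofReal (Real.exp (-t * δ + t ^ 2 * s)) := by
  classical
  have hνfact : ∀ i, ∀ j : ℕ,
      (μ.map (X i)) {j + 1} = ENNReal.ofReal ((1 - p i) ^ j * p i) := by
    intro i j
    rw [Measure.map_apply (hmeas i) (measurableSet_singleton _)]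
    have hpre : (X i) ⁻¹' {j + 1} = {ω | X i ω = j + 1} := by ext ω; simp
    rw [hpre, hgeom i (j + 1) (Nat.le_add_left 1 j)]
    simp
  have hprob : ∀ i, IsProbabilityMeasure (μ.map (X i)) := fun i =>
    Measure.isProbabilityMeasure_map (hmeas i).aemeasurable
  have hhp : ∀ i, h ≤ p i := fun i => hmin.2 ⟨i, rfl⟩
  have hti : ∀ i, t ≤ p i / 2 := fun i => le_trans ht1 (by linarith [hhp i])
  have hq0 : ∀ i, (0:ℝ) ≤ 1 - p i := fun i => by linarith [hp1 i]
  have hq1 : ∀ i, (1 - p i : ℝ) < 1 := fun i => by linarith [hp0 i]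
  have hnorm : ∀ i, ‖(1 - p i : ℝ)‖ < 1 := fun i => by
    rw [Real.norm_eq_abs, abs_of_nonneg (hq0 i)]; exact hq1 i
  -- expectation of each variable
  have hE : ∀ i, Integrable (fun ω => (X i ω : ℝ)) μ ∧
      ∫ ω, (X i ω : ℝ) ∂μ = 1 / p i := by
    intro i
    haveI := hprob i
    have h1 : Summable fun j : ℕ => ((j:ℝ) * (1 - p i) ^ j) := by
      simpa using summable_pow_mul_geometric_of_norm_lt_one (R := ℝ) 1 (hnorm i)
    have h2 : Summable fun j : ℕ => ((1 - p i) ^ j) :=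
      summable_geometric_of_lt_one (hq0 i) (hq1 i)
    have hsumE : Summable fun j : ℕ => ((j + 1 : ℕ) : ℝ) * ((1 - p i) ^ j * p i) := by
      refine ((h1.add h2).mul_right (p i)).congr fun j => ?_
      push_cast; ring
    have htsumE : ∑' j : ℕ, ((j + 1 : ℕ) : ℝ) * ((1 - p i) ^ j * p i) = 1 / p i := by
      have e1 : ∀ j : ℕ, ((j + 1 : ℕ) : ℝ) * ((1 - p i) ^ j * p i)
          = ((j:ℝ) * (1 - p i) ^ j + (1 - p i) ^ j) * p i := by
        intro j; push_cast; ring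
      rw [tsum_congr e1, tsum_mul_right, Summable.tsum_add h1 h2,
        tsum_coe_mul_geometric_of_norm_lt_one (hnorm i),
        tsum_geometric_of_lt_one (hq0 i) (hq1 i)]
      have hps : (1:ℝ) - (1 - p i) = p i := by ring
      rw [hps]
      have hpne : p i ≠ 0 := ne_of_gt (hp0 i)
      field_simp
      ring
    have hint := geom_integral (hp0 i) (hp1 i) (μ.map (X i)) (hνfact i)
      (fun j : ℕ => (j : ℝ)) (fun j => Nat.cast_nonneg j) hsumE
    constructor
    · exact (integrable_map_measure
        ((measurable_of_countable (fun j : ℕ => (j:ℝ))).aestronglyMeasurable)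
        (hmeas i).aemeasurable).mp hint.1
    · have hmap := integral_map (φ := X i) (μ := μ) (hmeas i).aemeasurable
        ((measurable_of_countable (fun j : ℕ => (j:ℝ))).aestronglyMeasurable)
      rw [← hmap, hint.2, htsumE]
  -- mgf of each variable
  have hmgf : ∀ i, Integrable (fun ω => Real.exp (t * (X i ω : ℝ))) μ ∧
      mgf (fun ω => (X i ω : ℝ)) μ t ≤ Real.exp (t / p i + t ^ 2 / p i ^ 2) := by
    intro i
    haveI := hprob i
    have hqe : (1 - p i) * Real.exp t < 1 :=
      geom_qexp_lt_one (hp0 i) (hp1 i) ht0 (hti i)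
    have hqe0 : 0 ≤ (1 - p i) * Real.exp t :=
      mul_nonneg (hq0 i) (Real.exp_pos t).le
    have hgeq : ∀ j : ℕ, (p i * Real.exp t) * ((1 - p i) * Real.exp t) ^ j
        = Real.exp (t * ((j + 1 : ℕ) : ℝ)) * ((1 - p i) ^ j * p i) := by
      intro j
      have he : Real.exp (t * ((j + 1 : ℕ) : ℝ)) = Real.exp t ^ (j + 1) := by
        rw [← Real.exp_nat_mul]
        congr 1
        push_cast; ring
      rw [he, mul_pow, pow_succ]
      ring
    have hsumM : Summable fun j : ℕ =>
        Real.exp (t * ((j + 1 : ℕ) : ℝ)) * ((1 - p i) ^ j * p i) :=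
      ((summable_geometric_of_lt_one hqe0 hqe).mul_left (p i * Real.exp t)).congr hgeq
    have htsumM : ∑' j : ℕ, Real.exp (t * ((j + 1 : ℕ) : ℝ)) * ((1 - p i) ^ j * p i)
        = p i * Real.exp t / (1 - (1 - p i) * Real.exp t) := by
      rw [tsum_congr (fun j => (hgeq j).symm), tsum_mul_left,
        tsum_geometric_of_lt_one hqe0 hqe, div_eq_mul_inv]
    have hint := geom_integral (hp0 i) (hp1 i) (μ.map (X i)) (hνfact i)
      (fun j : ℕ => Real.exp (t * (j : ℝ))) (fun j => (Real.exp_pos _).le) hsumM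
    have hIntExp : Integrable (fun ω => Real.exp (t * (X i ω : ℝ))) μ :=
      (integrable_map_measure
        ((measurable_of_countable (fun j : ℕ => Real.exp (t * (j:ℝ)))).aestronglyMeasurable)
        (hmeas i).aemeasurable).mp hint.1
    refine ⟨hIntExp, ?_⟩
    have hmap := integral_map (φ := X i) (μ := μ) (hmeas i).aemeasurable
      ((measurable_of_countable (fun j : ℕ => Real.exp (t * (j:ℝ)))).aestronglyMeasurable)
    have hmgf_eq : mgf (fun ω => (X i ω : ℝ)) μ t
        = p i * Real.exp t / (1 - (1 - p i) * Real.exp t) := by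
      show (∫ ω, Real.exp (t * (X i ω : ℝ)) ∂μ) = _
      rw [← hmap, hint.2, htsumM]
    rw [hmgf_eq]
    exact geom_mgf_le (hp0 i) (hp1 i) ht0 (hti i)
  -- expectation of the sum
  have hm : ∫ ω, ∑ i, (X i ω : ℝ) ∂μ = ∑ i, 1 / p i := by
    rw [integral_finset_sum Finset.univ (fun i _ => (hE i).1)]
    exact Finset.sum_congr rfl fun i _ => (hE i).2
  -- independence of the real versions
  have hindep' : iIndepFun (fun i ω => (X i ω : ℝ)) μ :=
    hindep.comp (fun _ (j : ℕ) => (j : ℝ)) (fun _ => measurable_of_countable _)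
  have hmeasR : ∀ i, Measurable fun ω => (X i ω : ℝ) := fun i =>
    (measurable_of_countable (fun j : ℕ => (j:ℝ))).comp (hmeas i)
  have hint_sum : Integrable
      (fun ω => Real.exp (t * (∑ i, fun ω' => (X i ω' : ℝ)) ω)) μ :=
    hindep'.integrable_exp_mul_sum hmeasR (fun i _ => (hmgf i).1)
  have hch := measure_ge_le_exp_mul_mgf (μ := μ)
    (X := ∑ i, fun ω => (X i ω : ℝ)) ((∑ i, 1 / p i) + δ) ht0 hint_sum
  have hprod : mgf (∑ i, fun ω => (X i ω : ℝ)) μ t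
      = ∏ i, mgf (fun ω => (X i ω : ℝ)) μ t := hindep'.mgf_sum hmeasR Finset.univ
  have hprodle : ∏ i, mgf (fun ω => (X i ω : ℝ)) μ t
      ≤ ∏ i, Real.exp (t / p i + t ^ 2 / p i ^ 2) :=
    Finset.prod_le_prod (fun i _ => mgf_nonneg) (fun i _ => (hmgf i).2)
  have hexps : ∏ i, Real.exp (t / p i + t ^ 2 / p i ^ 2)
      = Real.exp (t * (∑ i, 1 / p i) + t ^ 2 * (∑ i, 1 / (p i) ^ 2)) := by
    rw [← Real.exp_sum]
    congr 1
    rw [Finset.mul_sum, Finset.mul_sum, ← Finset.sum_add_distrib]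
    exact Finset.sum_congr rfl fun i _ => by rw [mul_one_div, mul_one_div]
  have hts : t ^ 2 * (∑ i, 1 / (p i) ^ 2) ≤ t ^ 2 * s :=
    mul_le_mul_of_nonneg_left hs (sq_nonneg t)
  have hfinal : (μ {ω | (∑ i, 1 / p i) + δ ≤ (∑ i, fun ω' => (X i ω' : ℝ)) ω}).toReal
      ≤ Real.exp (-t * δ + t ^ 2 * s) := by
    calc (μ {ω | (∑ i, 1 / p i) + δ ≤ (∑ i, fun ω' => (X i ω' : ℝ)) ω}).toReal
        ≤ Real.exp (-t * ((∑ i, 1 / p i) + δ))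
          * mgf (∑ i, fun ω => (X i ω : ℝ)) μ t := hch
      _ ≤ Real.exp (-t * ((∑ i, 1 / p i) + δ))
          * Real.exp (t * (∑ i, 1 / p i) + t ^ 2 * (∑ i, 1 / (p i) ^ 2)) := by
          rw [hprod]
          exact mul_le_mul_of_nonneg_left (le_trans hprodle (le_of_eq hexps))
            (Real.exp_pos _).le
      _ = Real.exp (-t * δ + t ^ 2 * (∑ i, 1 / (p i) ^ 2)) := by
          rw [← Real.exp_add]
          congr 1
          ring
      _ ≤ Real.exp (-t * δ + t ^ 2 * s) := Real.exp_le_exp.2 (by linarith)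
  have hsub : {ω | (∑ i, (X i ω : ℝ)) > (∫ ω, ∑ i, (X i ω : ℝ) ∂μ) + δ}
      ⊆ {ω | (∑ i, 1 / p i) + δ ≤ (∑ i, fun ω' => (X i ω' : ℝ)) ω} := by
    intro ω hω
    simp only [Set.mem_setOf_eq, Finset.sum_apply] at hω ⊢
    rw [hm] at hω
    exact hω.le
  calc μ {ω | (∑ i, (X i ω : ℝ)) > (∫ ω, ∑ i, (X i ω : ℝ) ∂μ) + δ}
      ≤ μ {ω | (∑ i, 1 / p i) + δ ≤ (∑ i, fun ω' => (X i ω' : ℝ)) ω} :=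
        measure_mono hsub
    _ = ENNReal.ofReal
        ((μ {ω | (∑ i, 1 / p i) + δ ≤ (∑ i, fun ω' => (X i ω' : ℝ)) ω}).toReal) :=
        (ENNReal.ofReal_toReal (measure_ne_top μ _)).symm
    _ ≤ ENNReal.ofReal (Real.exp (-t * δ + t ^ 2 * s)) :=
        ENNReal.ofReal_le_ofReal hfinal
end
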